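/- Let X be a topological space and let σ : [0,1] → π₀(∫_K F) be a function into the set of connected components of the category of elements of the forgetful functor F on the poset of open sets of X. Suppose σ satisfies the local continuity property (⋆): for every open U ⊆ X, every t ∈ [0,1], and every point x ∈ U with (U,x) in the component σ(t), there is a neighborhood N of t in [0,1] and a continuous map σ_U^N : N → U with σ_U^N(t) = x and (U, σ_U^N(s)) in σ(s) for all s ∈ N. Then the map σ_X : [0,1] → X defined by σ_X(t) = the unique point x with (X, x) ∈ σ(t) is a well-defined continuous path in X. -/

import Mathlib

open CategoryTheory TopologicalSpace

/-- The forgetful functor sending an open set of `X` to its set of points. -/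
def forgetPoints (X : Type*) [TopologicalSpace X] : Opens X ⥤ Type _ where
  obj U := { x : X // x ∈ U }
  map {U V} f := TypeCat.ofHom fun x => ⟨x.1, leOfHom f x.2⟩

/-- The underlying point of an element of the category of elements of `forgetPoints X`. -/
def elemPt {X : Type*} [TopologicalSpace X] (e : (forgetPoints X).Elements) : X := e.2.1

lemma elemPt_zigzag {X : Type*} [TopologicalSpace X]
    (a b : (forgetPoints X).Elements) (h : Zigzag a b) : elemPt a = elemPt b := by
  induction h with
  | refl => rfl
  | tail _ hz ih =>
    rcases hz with h | h
    · obtain ⟨f⟩ := h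
      exact ih.trans (congrArg Subtype.val f.2)
    · obtain ⟨f⟩ := h
      exact ih.trans (congrArg Subtype.val f.2).symm

/-- The point extraction map on components. -/
def ptLift {X : Type*} [TopologicalSpace X] :
    Quot (Zigzag (J := (forgetPoints X).Elements)) → X :=
  Quot.lift elemPt elemPt_zigzag

/-- If `σ : [0,1] → π₀(∫F)` (components of the category of elements of the forgetful
functor on opens of `X`) satisfies the local continuity property `(⋆)`, then there is a
continuous path `γ : [0,1] → X` such that, for every `t`, `σ t` is the component of
`(X, γ t)`; i.e. `t ↦ (the unique point x with (X,x) ∈ σ t)` is a well-defined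
continuous path. -/
theorem stmt_9 {X : Type*} [TopologicalSpace X]
    (σ : unitInterval → Quot (Zigzag (J := (forgetPoints X).Elements)))
    (hstar : ∀ (U : Opens X) (t : unitInterval) (x : X) (hx : x ∈ U),
      σ t = Quot.mk Zigzag ⟨U, ⟨x, hx⟩⟩ →
      ∃ N ∈ nhds t, ∃ g : unitInterval → X, ContinuousOn g N ∧ g t = x ∧
        ∀ s ∈ N, ∃ hs : g s ∈ U, σ s = Quot.mk Zigzag ⟨U, ⟨g s, hs⟩⟩) :
    ∃ γ : unitInterval → X, Continuous γ ∧
      ∀ (t : unitInterval) (x : X) (hx : x ∈ (⊤ : Opens X)),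
        (σ t = Quot.mk Zigzag ⟨⊤, ⟨x, hx⟩⟩ ↔ γ t = x) := by
  have hrep : ∀ t, ∃ h : ptLift (σ t) ∈ (⊤ : Opens X),
      σ t = Quot.mk Zigzag ⟨⊤, ⟨ptLift (σ t), h⟩⟩ := by
    intro t
    obtain ⟨⟨U, x⟩, he⟩ := Quot.exists_rep (σ t)
    have hz : Zigzag (J := (forgetPoints X).Elements) ⟨U, x⟩
        ⟨⊤, ⟨x.1, trivial⟩⟩ :=
      Relation.ReflTransGen.single (Or.inl ⟨⟨homOfLE le_top, rfl⟩⟩)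
    have h2 : σ t = Quot.mk Zigzag ⟨⊤, ⟨x.1, trivial⟩⟩ :=
      he.symm.trans (Quot.sound hz)
    refine ⟨trivial, ?_⟩
    rw [h2]
    rfl
  refine ⟨fun t => ptLift (σ t), ?_, ?_⟩
  · rw [continuous_iff_continuousAt]
    intro t
    obtain ⟨h, ht⟩ := hrep t
    obtain ⟨N, hN, g, hg, hgt, hgs⟩ := hstar ⊤ t (ptLift (σ t)) h ht
    have heq : ∀ s ∈ N, g s = ptLift (σ s) := by
      intro s hs
      obtain ⟨hs', h2⟩ := hgs s hs
      rw [h2]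
      rfl
    exact (hg.continuousAt hN).congr
      (Filter.eventuallyEq_of_mem hN fun s hs => heq s hs)
  · intro t x hx
    constructor
    · intro h
      show ptLift (σ t) = x
      rw [h]
      rfl
    · intro h
      obtain ⟨h', ht⟩ := hrep t
      subst h
      rw [ht]
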